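/- Let A ⊆ ℕ. If there exists a ∉ A such that for every b ∈ A with b < a there exist x, y ∈ A with y − x = a − b, then there is no subtraction set S ⊆ ℕ₊ for which A equals the set of P-positions of the subtraction game with subtraction set S. -/
import Mathlib


/-- P-positions of the subtraction game with subtraction set `S`:
`x` is a P-position iff every move `x → x - s` (for `s ∈ S`, `0 < s ≤ x`) leads to a
non-P-position. -/
def subP (S : Set ℕ) : ℕ → Prop
  | x => ∀ s, s ∈ S → ∀ _ : 0 < s, ∀ _ : s ≤ x, ¬ subP S (x - s)
termination_by x => x
decreasing_by all_goals omega

/-- If there is an `a ∉ A` such that every `b ∈ A` with `b < a` admits `x, y ∈ A` with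
`y - x = a - b`, then `A` is not the set of P-positions of any subtraction game. -/
theorem no_subtraction_game (A : Set ℕ)
    (h : ∃ a ∉ A, ∀ b ∈ A, b < a → ∃ x ∈ A, ∃ y ∈ A, x + (a - b) = y) :
    ¬ ∃ S : Set ℕ, (∀ s ∈ S, 0 < s) ∧ (∀ x, x ∈ A ↔ subP S x) := by
  rintro ⟨S, hSpos, hA⟩
  obtain ⟨a, haA, hprop⟩ := h
  have hnP : ¬ subP S a := fun hp => haA ((hA a).mpr hp)
  rw [subP] at hnP
  push_neg at hnP
  obtain ⟨s, hsS, hs0, hsa, hPb⟩ := hnP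
  have hbA : a - s ∈ A := (hA _).mpr hPb
  obtain ⟨x, hxA, y, hyA, hxy⟩ := hprop _ hbA (by omega)
  have hy : y = x + s := by omega
  have hyP := (hA y).mp hyA
  rw [subP] at hyP
  exact hyP s hsS hs0 (by omega) (by simpa [hy] using (hA x).mp hxA)
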